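/- Let E be a finite-dimensional real inner product space, and let W ⊆ V be closed convex cones in E, each containing 0, with W ≠ V and with V containing no line, i.e., V ∩ (−V) = {0}. Then there exist a vector y ∈ E and a point z₀ ∈ V \ {0} such that ⟨y, z⟩ ≥ 0 for every z ∈ V, ⟨y, z⟩ > 0 for every z ∈ W \ {0}, and ⟨y, z₀⟩ = 0. -/

import Mathlib

open RealInnerProductSpace

theorem stmt2_sep_aux {E : Type*} [NormedAddCommGroup E] [InnerProductSpace ℝ E]
    [CompleteSpace E] (K : ConvexCone ℝ E) (h0 : (0 : E) ∈ K) (hc : IsClosed (K : Set E))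
    {x₀ : E} (hx : x₀ ∉ K) : ∃ y : E, (∀ x ∈ K, 0 ≤ ⟪x, y⟫) ∧ ⟪y, x₀⟫ < 0 := by
  let P : ProperCone ℝ E :=
    { carrier := (K : Set E)
      add_mem' := fun ha hb => K.add_mem ha hb
      zero_mem' := h0
      smul_mem' := fun c a ha => by
        rcases eq_or_lt_of_le c.2 with h | h
        · have : c = 0 := NNReal.coe_eq_zero.1 h.symm
          subst this; simpa using h0
        · exact K.smul_mem (c := (c : ℝ)) h ha
      isClosed' := hc }
  obtain ⟨y, h1, h2⟩ := ProperCone.hyperplane_separation' P hx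
  exact ⟨y, h1, by rwa [real_inner_comm]⟩

/-- If `W ⊆ V` are closed convex cones (each containing `0`) in a finite-dimensional
real inner product space, with `W ≠ V` and `V` containing no line, then there are a
vector `y` and a nonzero point `z₀ ∈ V` such that `⟪y, ·⟫` is nonnegative on `V`,
strictly positive on `W \ {0}`, and vanishes at `z₀`. -/
theorem stmt2 {E : Type*} [NormedAddCommGroup E] [InnerProductSpace ℝ E]
    [FiniteDimensional ℝ E]
    (W V : ConvexCone ℝ E) (hWclosed : IsClosed (W : Set E))
    (hVclosed : IsClosed (V : Set E))
    (hW0 : (0 : E) ∈ W) (hV0 : (0 : E) ∈ V)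
    (hWV : (W : Set E) ⊆ (V : Set E)) (hne : (W : Set E) ≠ (V : Set E))
    (hline : ∀ z ∈ V, -z ∈ V → z = 0) :
    ∃ y z₀ : E, z₀ ∈ V ∧ z₀ ≠ 0 ∧ (∀ z ∈ V, 0 ≤ ⟪y, z⟫) ∧
      (∀ z ∈ W, z ≠ 0 → 0 < ⟪y, z⟫) ∧ ⟪y, z₀⟫ = 0 := by
  haveI : CompleteSpace E := FiniteDimensional.complete ℝ E
  -- a point of V not in W
  obtain ⟨x, hxV, hxW⟩ := Set.exists_of_ssubset (hWV.ssubset_of_ne hne)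
  have hx0 : x ≠ 0 := fun h => hxW (h ▸ hW0)
  -- separation of x from W
  obtain ⟨u, hu1, hu2⟩ :=
    stmt2_sep_aux W hW0 hWclosed hxW
  have hu1' : ∀ w ∈ W, 0 ≤ ⟪u, w⟫ := fun w hw => by
    rw [real_inner_comm]; exact hu1 w hw
  -- the compact base K of V
  set K : Set E := (V : Set E) ∩ Metric.sphere 0 1 with hK
  have hKcompact : IsCompact K := (isCompact_sphere 0 1).inter_left hVclosed
  have hscale : ∀ z ∈ V, z ≠ 0 → ‖z‖⁻¹ • z ∈ K := by
    intro z hz hz0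
    refine ⟨V.smul_mem (inv_pos.2 (norm_pos_iff.2 hz0)) hz, ?_⟩
    rw [mem_sphere_zero_iff_norm, norm_smul, norm_inv, norm_norm,
      inv_mul_cancel₀ (norm_ne_zero_iff.2 hz0)]
  have hx'K : ‖x‖⁻¹ • x ∈ K := hscale x hxV hx0
  -- strictly positive functional s on K, nonnegative on V
  obtain ⟨s, hs1, hs2⟩ : ∃ s : E, (∀ z ∈ V, 0 ≤ ⟪s, z⟫) ∧ ∀ z ∈ K, 0 < ⟪s, z⟫ := by
    have hch : ∀ z : K, ∃ v : E, (∀ x ∈ V, 0 ≤ ⟪v, x⟫) ∧ 0 < ⟪v, (z : E)⟫ := by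
      rintro ⟨z, hzV, hzS⟩
      have hz0 : z ≠ 0 := by
        intro h
        simp [h, mem_sphere_zero_iff_norm] at hzS
      have hnz : -z ∉ V := fun h => hz0 (hline z hzV h)
      obtain ⟨v, hv1, hv2⟩ :=
        stmt2_sep_aux V hV0 hVclosed hnz
      refine ⟨v, fun a ha => by rw [real_inner_comm]; exact hv1 a ha, ?_⟩
      rw [inner_neg_right] at hv2
      show 0 < ⟪v, z⟫
      linarith
    choose g hg1 hg2 using hch
    have hUopen : ∀ i : K, IsOpen {x : E | 0 < ⟪g i, x⟫} := fun i =>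
      isOpen_lt continuous_const (continuous_const.inner continuous_id)
    have hcover : K ⊆ ⋃ i : K, {x : E | 0 < ⟪g i, x⟫} := fun z hz =>
      Set.mem_iUnion.2 ⟨⟨z, hz⟩, hg2 ⟨z, hz⟩⟩
    obtain ⟨t, ht⟩ := hKcompact.elim_finite_subcover _ hUopen hcover
    refine ⟨∑ i ∈ t, g i, ?_, ?_⟩
    · intro z hz
      rw [sum_inner]
      exact Finset.sum_nonneg fun i _ => hg1 i z hz
    · intro z hz
      rw [sum_inner]
      obtain ⟨i, hit, hiz⟩ := Set.mem_iUnion₂.1 (ht hz)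
      exact Finset.sum_pos' (fun j _ => hg1 j z (hz.1)) ⟨i, hit, hiz⟩
  -- the set of admissible parameters
  set T : Set ℝ := {t : ℝ | 0 ≤ t ∧ ∃ z ∈ K, ⟪u + t • s, z⟫ ≤ 0} with hT
  set x' : E := ‖x‖⁻¹ • x with hx'
  have hux' : ⟪u, x'⟫ < 0 := by
    rw [hx', real_inner_smul_right]
    exact mul_neg_of_pos_of_neg (inv_pos.2 (norm_pos_iff.2 hx0)) hu2
  have hsx' : 0 < ⟪s, x'⟫ := hs2 x' hx'K
  set t₀ : ℝ := -⟪u, x'⟫ / ⟪s, x'⟫ with ht₀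
  have ht₀pos : 0 < t₀ := div_pos (by linarith) hsx'
  have ht₀T : t₀ ∈ T := by
    refine ⟨le_of_lt ht₀pos, x', hx'K, ?_⟩
    rw [inner_add_left, real_inner_smul_left, ht₀,
      div_mul_cancel₀ _ (ne_of_gt hsx')]
    linarith
  have hTne : T.Nonempty := ⟨t₀, ht₀T⟩
  -- boundedness of T
  obtain ⟨zm, hzmK, hzm⟩ := hKcompact.exists_isMinOn (f := fun z => ⟪s, z⟫) ⟨x', hx'K⟩
    ((continuous_const.inner continuous_id).continuousOn)
  set m : ℝ := ⟪s, zm⟫ with hm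
  have hmpos : 0 < m := hs2 zm hzmK
  have hbdd : BddAbove T := by
    refine ⟨‖u‖ / m, fun t ht => ?_⟩
    obtain ⟨ht0, z, hzK, hz⟩ := ht
    rw [inner_add_left, real_inner_smul_left] at hz
    have h1 : m ≤ ⟪s, z⟫ := hzm hzK
    have h2 : -‖u‖ ≤ ⟪u, z⟫ := by
      have := abs_real_inner_le_norm u z
      have hz1 : ‖z‖ = 1 := mem_sphere_zero_iff_norm.1 hzK.2
      rw [hz1, mul_one] at this
      linarith [abs_le.1 this]
    have h3 : t * m ≤ t * ⟪s, z⟫ := mul_le_mul_of_nonneg_left h1 ht0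
    rw [le_div_iff₀ hmpos]
    linarith
  set ts : ℝ := sSup T with hts
  have htst₀ : t₀ ≤ ts := le_csSup hbdd ht₀T
  have htspos : 0 < ts := lt_of_lt_of_le ht₀pos htst₀
  set y : E := u + ts • s with hy
  -- y is nonnegative on K
  have hyK : ∀ z ∈ K, 0 ≤ ⟪y, z⟫ := by
    intro z hzK
    by_contra hcon
    push_neg at hcon
    have hsz : 0 < ⟪s, z⟫ := hs2 z hzK
    set ε : ℝ := -⟪y, z⟫ / ⟪s, z⟫ with hε
    have hεpos : 0 < ε := div_pos (by linarith) hsz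
    have : ts + ε ∈ T := by
      refine ⟨by linarith, z, hzK, ?_⟩
      rw [inner_add_left, real_inner_smul_left]
      have hyz : ⟪y, z⟫ = ⟪u, z⟫ + ts * ⟪s, z⟫ := by
        rw [hy, inner_add_left, real_inner_smul_left]
      have : ε * ⟪s, z⟫ = -⟪y, z⟫ := div_mul_cancel₀ _ (ne_of_gt hsz)
      nlinarith
    have := le_csSup hbdd this
    linarith
  -- minimum of y on K
  obtain ⟨z₀, hz₀K, hz₀min⟩ := hKcompact.exists_isMinOn (f := fun z => ⟪y, z⟫) ⟨x', hx'K⟩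
    ((continuous_const.inner continuous_id).continuousOn)
  have hz₀le : ⟪y, z₀⟫ ≤ 0 := by
    by_contra hcon
    push_neg at hcon
    set δ : ℝ := ⟪y, z₀⟫ with hδ
    set B : ℝ := ‖s‖ + 1 with hB
    have hBpos : 0 < B := by positivity
    set η : ℝ := δ / (2 * B) with hη
    have hηpos : 0 < η := div_pos hcon (by positivity)
    have hsub : ∀ t ∈ T, t ≤ ts - η := by
      rintro t ⟨ht0, z, hzK, hz⟩
      have htle : t ≤ ts := le_csSup hbdd ⟨ht0, z, hzK, hz⟩
      rw [inner_add_left, real_inner_smul_left] at hz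
      have hyz : δ ≤ ⟪y, z⟫ := hz₀min hzK
      have hyz' : ⟪y, z⟫ = ⟪u, z⟫ + ts * ⟪s, z⟫ := by
        rw [hy, inner_add_left, real_inner_smul_left]
      have hszB : ⟪s, z⟫ ≤ B := by
        have := real_inner_le_norm s z
        have hz1 : ‖z‖ = 1 := mem_sphere_zero_iff_norm.1 hzK.2
        rw [hz1, mul_one] at this
        linarith
      have hsznn : 0 < ⟪s, z⟫ := hs2 z hzK
      -- (ts - t) * ⟪s,z⟫ ≥ δ
      have key : δ ≤ (ts - t) * ⟪s, z⟫ := by nlinarith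
      have key2 : δ ≤ (ts - t) * B := by nlinarith
      have h4 : 2 * η ≤ ts - t := by
        have hprod : 2 * η * B = δ := by rw [hη]; field_simp
        nlinarith
      linarith
    have : ts ≤ ts - η := csSup_le hTne hsub
    linarith
  have hz₀0 : ⟪y, z₀⟫ = 0 := le_antisymm hz₀le (hyK z₀ hz₀K)
  -- assemble
  refine ⟨y, z₀, hz₀K.1, ?_, ?_, ?_, hz₀0⟩
  · intro h
    have := mem_sphere_zero_iff_norm.1 hz₀K.2
    rw [h, norm_zero] at this
    norm_num at this
  · intro z hzV
    rcases eq_or_ne z 0 with rfl | hz0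
    · simp
    · have := hyK _ (hscale z hzV hz0)
      rw [real_inner_smul_right] at this
      have hnorm : 0 < ‖z‖⁻¹ := inv_pos.2 (norm_pos_iff.2 hz0)
      nlinarith
  · intro w hwW hw0
    have hsw : 0 < ⟪s, w⟫ := by
      have := hs2 _ (hscale w (hWV hwW) hw0)
      rw [real_inner_smul_right] at this
      have hnorm : 0 < ‖w‖⁻¹ := inv_pos.2 (norm_pos_iff.2 hw0)
      nlinarith
    have huw : 0 ≤ ⟪u, w⟫ := hu1' w hwW
    rw [hy, inner_add_left, real_inner_smul_left]
    nlinarith
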